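/- Let {f_ε}_{0≤ε≤ε₀} be a good family. Then for every 0 < ε ≤ ε₀ the scaling function s_ε of f_ε exists and is Hölder continuous on the dual Cantor set C*, and for every 0 < ε₁ ≤ ε₀ the functions s_ε converge to s_{ε₁} uniformly on C* as ε tends to ε₁. -/

import Mathlib

open Set MeasureTheory Filter Topology

noncomputable def len (s : Set ℝ) : ℝ := (volume s).toReal

noncomputable def branch (f : ℝ → ℝ) : Bool → ℝ → ℝ
  | false => Function.invFunOn f (Icc (-1) 0)
  | true => Function.invFunOn f (Icc 0 1)

noncomputable def gw (f : ℝ → ℝ) : List Bool → ℝ → ℝ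
  | [] => id
  | b :: w => branch f b ∘ gw f w

noncomputable def Iw (f : ℝ → ℝ) (w : List Bool) : Set ℝ := gw f w '' Icc (-1) 1

def word (a : ℕ → Bool) (n : ℕ) : List Bool := ((List.range (n + 1)).reverse).map a

noncomputable def ratio (f : ℝ → ℝ) (a : ℕ → Bool) (n : ℕ) : ℝ :=
  len (Iw f (word a n)) / len (Iw f ((word a n).dropLast))

def IsScalingFun (f : ℝ → ℝ) (s : (ℕ → Bool) → ℝ) : Prop :=
  ∀ a : ℕ → Bool, Tendsto (ratio f a) atTop (nhds (s a))

def HolderOnDual (s : (ℕ → Bool) → ℝ) : Prop :=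
  ∃ C > (0:ℝ), ∃ lam ∈ Ioo (0:ℝ) 1, ∀ a b : ℕ → Bool, ∀ n : ℕ,
    (∀ k < n, a k = b k) → |s a - s b| ≤ C * lam ^ n

def EvZero (a : ℕ → Bool) : Prop := ∃ N, ∀ n ≥ N, a n = false

def Lambda (f : ℝ → ℝ) : Set ℝ := {x | ∀ n : ℕ, f^[n] x ∈ Icc (-1) 1}

structure GoodFamily where
  eps0 : ℝ
  eps0_pos : 0 < eps0
  f : ℝ → ℝ → ℝ
  f' : ℝ → ℝ → ℝ
  gamma : ℝ
  one_lt_gamma : 1 < gamma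
  mono : ∀ ε ∈ Icc 0 eps0, StrictMonoOn (f ε) (Icc (-1) 0)
  anti : ∀ ε ∈ Icc 0 eps0, StrictAntiOn (f ε) (Icc 0 1)
  map_neg_one : ∀ ε ∈ Icc 0 eps0, f ε (-1) = -1
  map_one : ∀ ε ∈ Icc 0 eps0, f ε 1 = -1
  map_zero : ∀ ε ∈ Icc 0 eps0, f ε 0 = 1 + ε
  smooth : ContDiffOn ℝ 1 (fun p : ℝ × ℝ => f p.1 p.2) (Icc 0 eps0 ×ˢ Icc (-1) 1)
  deriv_f : ∀ ε ∈ Icc 0 eps0, ∀ x ∈ Icc (-1:ℝ) 1,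
    HasDerivWithinAt (f ε) (f' ε x) (Icc (-1) 1) x
  Rneg : ℝ → ℝ → ℝ
  Rpos : ℝ → ℝ → ℝ
  Rneg_cont : ContinuousOn (fun p : ℝ × ℝ => Rneg p.1 p.2) (Icc 0 eps0 ×ˢ Icc (-1) 0)
  Rpos_cont : ContinuousOn (fun p : ℝ × ℝ => Rpos p.1 p.2) (Icc 0 eps0 ×ˢ Icc 0 1)
  Rneg_ne : ∀ ε ∈ Icc 0 eps0, ∀ x ∈ Icc (-1:ℝ) 0, Rneg ε x ≠ 0
  Rpos_ne : ∀ ε ∈ Icc 0 eps0, ∀ x ∈ Icc (0:ℝ) 1, Rpos ε x ≠ 0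
  Rneg_eq : ∀ ε ∈ Icc 0 eps0, ∀ x ∈ Ico (-1:ℝ) 0, Rneg ε x = f' ε x / |x| ^ (gamma - 1)
  Rpos_eq : ∀ ε ∈ Icc 0 eps0, ∀ x ∈ Ioc (0:ℝ) 1, Rpos ε x = f' ε x / |x| ^ (gamma - 1)
  K' : ℝ
  K'_pos : 0 < K'
  alpha' : ℝ
  alpha'_mem : alpha' ∈ Ioc (0:ℝ) 1
  holder' : ∀ ε ∈ Icc 0 eps0, ∀ x ∈ Icc (-1:ℝ) 1, ∀ y ∈ Icc (-1:ℝ) 1,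
    |f' ε x - f' ε y| ≤ K' * |x - y| ^ alpha'
  K'' : ℝ
  K''_pos : 0 < K''
  alpha'' : ℝ
  alpha''_mem : alpha'' ∈ Ioc (0:ℝ) 1
  holder''_neg : ∀ ε ∈ Icc 0 eps0, ∀ x ∈ Ico (-1:ℝ) 0, ∀ y ∈ Ico (-1:ℝ) 0,
    |f' ε x / |x| ^ (gamma - 1) - f' ε y / |y| ^ (gamma - 1)| ≤ K'' * |x - y| ^ alpha''
  holder''_pos : ∀ ε ∈ Icc 0 eps0, ∀ x ∈ Ioc (0:ℝ) 1, ∀ y ∈ Ioc (0:ℝ) 1,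
    |f' ε x / |x| ^ (gamma - 1) - f' ε y / |y| ^ (gamma - 1)| ≤ K'' * |x - y| ^ alpha''
  C0 : ℝ
  C0_pos : 0 < C0
  lam : ℝ
  lam_mem : lam ∈ Ioo (0:ℝ) 1
  decay : ∀ ε ∈ Icc 0 eps0, ∀ n : ℕ, 1 ≤ n → ∀ w : List Bool, w.length = n + 1 →
    len (Iw (f ε) w) ≤ C0 * lam ^ n


namespace SF
variable (F : GoodFamily) {ε : ℝ}

lemma f_cont (hε : ε ∈ Icc 0 F.eps0) : ContinuousOn (F.f ε) (Icc (-1) 1) := by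
  have h := F.smooth.continuousOn
  have : ContinuousOn (fun x : ℝ => (ε, x)) (Icc (-1) 1) :=
    (continuous_const.prodMk continuous_id).continuousOn
  exact h.comp this (fun x hx => ⟨hε, hx⟩)

lemma neg_one_le_eps : (-1:ℝ) ≤ 1 + ε → True := fun _ => trivial

lemma exists_left (hε : ε ∈ Icc 0 F.eps0) {y : ℝ} (hy : y ∈ Icc (-1:ℝ) 1) :
    ∃ x ∈ Icc (-1:ℝ) 0, F.f ε x = y := by
  have hc : ContinuousOn (F.f ε) (Icc (-1) 0) :=
    (f_cont F hε).mono (Icc_subset_Icc le_rfl (by norm_num))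
  have h1 : F.f ε (-1) = -1 := F.map_neg_one ε hε
  have h0 : F.f ε 0 = 1 + ε := F.map_zero ε hε
  have : y ∈ Icc (F.f ε (-1)) (F.f ε 0) := by
    rw [h1, h0]; exact ⟨hy.1, le_trans hy.2 (by linarith [hε.1])⟩
  obtain ⟨x, hx, hfx⟩ := intermediate_value_Icc (by norm_num) hc this
  exact ⟨x, hx, hfx⟩

lemma exists_right (hε : ε ∈ Icc 0 F.eps0) {y : ℝ} (hy : y ∈ Icc (-1:ℝ) 1) :
    ∃ x ∈ Icc (0:ℝ) 1, F.f ε x = y := by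
  have hc : ContinuousOn (F.f ε) (Icc 0 1) :=
    (f_cont F hε).mono (Icc_subset_Icc (by norm_num) le_rfl)
  have h1 : F.f ε 1 = -1 := F.map_one ε hε
  have h0 : F.f ε 0 = 1 + ε := F.map_zero ε hε
  have : y ∈ Icc (F.f ε 1) (F.f ε 0) := by
    rw [h1, h0]; exact ⟨hy.1, le_trans hy.2 (by linarith [hε.1])⟩
  obtain ⟨x, hx, hfx⟩ := intermediate_value_Icc' (by norm_num) hc this
  exact ⟨x, hx, hfx⟩

lemma branch_exists (hε : ε ∈ Icc 0 F.eps0) (b : Bool) {y : ℝ} (hy : y ∈ Icc (-1:ℝ) 1) :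
    ∃ x ∈ (if b then Icc (0:ℝ) 1 else Icc (-1:ℝ) 0), F.f ε x = y := by
  cases b
  · simpa using exists_left F hε hy
  · simpa using exists_right F hε hy

lemma branch_mem (hε : ε ∈ Icc 0 F.eps0) (b : Bool) {y : ℝ} (hy : y ∈ Icc (-1:ℝ) 1) :
    branch (F.f ε) b y ∈ (if b then Icc (0:ℝ) 1 else Icc (-1:ℝ) 0) := by
  cases b
  · simpa [branch] using Function.invFunOn_mem (s := Icc (-1:ℝ) 0) (f := F.f ε) (by simpa using branch_exists F hε false hy)
  · simpa [branch] using Function.invFunOn_mem (s := Icc (0:ℝ) 1) (f := F.f ε) (by simpa using branch_exists F hε true hy)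

lemma branch_apply (hε : ε ∈ Icc 0 F.eps0) (b : Bool) {y : ℝ} (hy : y ∈ Icc (-1:ℝ) 1) :
    F.f ε (branch (F.f ε) b y) = y := by
  cases b
  · simpa [branch] using Function.invFunOn_eq (f := F.f ε) (by simpa using branch_exists F hε false hy)
  · simpa [branch] using Function.invFunOn_eq (f := F.f ε) (by simpa using branch_exists F hε true hy)

lemma branch_unique (hε : ε ∈ Icc 0 F.eps0) (b : Bool) {x : ℝ}
    (hx : x ∈ (if b then Icc (0:ℝ) 1 else Icc (-1:ℝ) 0)) (hy : F.f ε x ∈ Icc (-1:ℝ) 1) :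
    branch (F.f ε) b (F.f ε x) = x := by
  have hm := branch_mem F hε b hy
  have ha := branch_apply F hε b hy
  cases b
  · simp only [if_neg Bool.false_ne_true] at hx hm ⊢
    exact (F.mono ε hε).injOn hm hx ha
  · simp only [if_pos rfl] at hx hm ⊢
    exact (F.anti ε hε).injOn hm hx ha

end SF
namespace SF
variable (F : GoodFamily) {ε : ℝ}

lemma branch_false_lt (hε : ε ∈ Icc 0 F.eps0) {y y' : ℝ} (hy : y ∈ Icc (-1:ℝ) 1)
    (hy' : y' ∈ Icc (-1:ℝ) 1) (h : y < y') :
    branch (F.f ε) false y < branch (F.f ε) false y' := by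
  have hm := branch_mem F hε false hy
  have hm' := branch_mem F hε false hy'
  simp only [if_neg Bool.false_ne_true] at hm hm'
  by_contra hle
  push_neg at hle
  have := (F.mono ε hε).monotoneOn hm' hm hle
  rw [branch_apply F hε false hy, branch_apply F hε false hy'] at this
  linarith

lemma branch_true_lt (hε : ε ∈ Icc 0 F.eps0) {y y' : ℝ} (hy : y ∈ Icc (-1:ℝ) 1)
    (hy' : y' ∈ Icc (-1:ℝ) 1) (h : y < y') :
    branch (F.f ε) true y' < branch (F.f ε) true y := by
  have hm := branch_mem F hε true hy
  have hm' := branch_mem F hε true hy'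
  simp only [if_pos] at hm hm'
  by_contra hle
  push_neg at hle
  have := (F.anti ε hε).antitoneOn hm hm' hle
  rw [branch_apply F hε true hy, branch_apply F hε true hy'] at this
  linarith

lemma branch_false_neg_one (hε : ε ∈ Icc 0 F.eps0) : branch (F.f ε) false (-1) = -1 := by
  have := branch_unique F hε false (x := -1) (by norm_num)
  rw [F.map_neg_one ε hε] at this
  exact this (by norm_num)

lemma branch_true_neg_one (hε : ε ∈ Icc 0 F.eps0) : branch (F.f ε) true (-1) = 1 := by
  have := branch_unique F hε true (x := 1) (by norm_num)
  rw [F.map_one ε hε] at this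
  exact this (by norm_num)

lemma branch_false_one_neg (hε : ε ∈ Ioc 0 F.eps0) : branch (F.f ε) false 1 < 0 := by
  have hε' : ε ∈ Icc 0 F.eps0 := ⟨le_of_lt hε.1, hε.2⟩
  have hm := branch_mem F hε' false (y := 1) (by norm_num)
  simp only [if_neg Bool.false_ne_true] at hm
  rcases lt_or_eq_of_le hm.2 with h | h
  · exact h
  · exfalso
    have := branch_apply F hε' false (y := 1) (by norm_num)
    rw [h, F.map_zero ε hε'] at this
    linarith [hε.1]

lemma branch_true_one_pos (hε : ε ∈ Ioc 0 F.eps0) : 0 < branch (F.f ε) true 1 := by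
  have hε' : ε ∈ Icc 0 F.eps0 := ⟨le_of_lt hε.1, hε.2⟩
  have hm := branch_mem F hε' true (y := 1) (by norm_num)
  simp only [if_pos] at hm
  rcases lt_or_eq_of_le hm.1 with h | h
  · exact h
  · exfalso
    have := branch_apply F hε' true (y := 1) (by norm_num)
    rw [← h, F.map_zero ε hε'] at this
    linarith [hε.1]

/-- image of a subinterval under the left branch -/
lemma branch_false_image (hε : ε ∈ Icc 0 F.eps0) {p q : ℝ} (hp : -1 ≤ p) (hpq : p ≤ q)
    (hq : q ≤ 1) :
    branch (F.f ε) false '' Icc p q = Icc (branch (F.f ε) false p) (branch (F.f ε) false q) := by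
  have hpm : p ∈ Icc (-1:ℝ) 1 := ⟨hp, le_trans hpq hq⟩
  have hqm : q ∈ Icc (-1:ℝ) 1 := ⟨le_trans hp hpq, hq⟩
  ext x
  constructor
  · rintro ⟨y, hy, rfl⟩
    have hym : y ∈ Icc (-1:ℝ) 1 := ⟨le_trans hp hy.1, le_trans hy.2 hq⟩
    constructor
    · rcases eq_or_lt_of_le hy.1 with h | h
      · rw [h]
      · exact le_of_lt (branch_false_lt F hε hpm hym h)
    · rcases eq_or_lt_of_le hy.2 with h | h
      · rw [h]
      · exact le_of_lt (branch_false_lt F hε hym hqm h)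
  · intro hx
    have hpmem := branch_mem F hε false hpm
    have hqmem := branch_mem F hε false hqm
    simp only [if_neg Bool.false_ne_true] at hpmem hqmem
    have hxm : x ∈ Icc (-1:ℝ) 0 := ⟨le_trans hpmem.1 hx.1, le_trans hx.2 hqmem.2⟩
    have hfx : F.f ε x ∈ Icc p q := by
      constructor
      · have := (F.mono ε hε).monotoneOn hpmem hxm hx.1
        rwa [branch_apply F hε false hpm] at this
      · have := (F.mono ε hε).monotoneOn hxm hqmem hx.2
        rwa [branch_apply F hε false hqm] at this
    have hfx1 : F.f ε x ∈ Icc (-1:ℝ) 1 := ⟨le_trans hpm.1 hfx.1, le_trans hfx.2 hqm.2⟩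
    exact ⟨F.f ε x, hfx, branch_unique F hε false (by simpa using hxm) hfx1⟩

lemma branch_true_image (hε : ε ∈ Icc 0 F.eps0) {p q : ℝ} (hp : -1 ≤ p) (hpq : p ≤ q)
    (hq : q ≤ 1) :
    branch (F.f ε) true '' Icc p q = Icc (branch (F.f ε) true q) (branch (F.f ε) true p) := by
  have hpm : p ∈ Icc (-1:ℝ) 1 := ⟨hp, le_trans hpq hq⟩
  have hqm : q ∈ Icc (-1:ℝ) 1 := ⟨le_trans hp hpq, hq⟩
  ext x
  constructor
  · rintro ⟨y, hy, rfl⟩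
    have hym : y ∈ Icc (-1:ℝ) 1 := ⟨le_trans hp hy.1, le_trans hy.2 hq⟩
    constructor
    · rcases eq_or_lt_of_le hy.2 with h | h
      · rw [h]
      · exact le_of_lt (branch_true_lt F hε hym hqm h)
    · rcases eq_or_lt_of_le hy.1 with h | h
      · rw [h]
      · exact le_of_lt (branch_true_lt F hε hpm hym h)
  · intro hx
    have hpmem := branch_mem F hε true hpm
    have hqmem := branch_mem F hε true hqm
    simp only [if_pos] at hpmem hqmem
    have hxm : x ∈ Icc (0:ℝ) 1 := ⟨le_trans hqmem.1 hx.1, le_trans hx.2 hpmem.2⟩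
    have hfx : F.f ε x ∈ Icc p q := by
      constructor
      · have := (F.anti ε hε).antitoneOn hxm hpmem hx.2
        rwa [branch_apply F hε true hpm] at this
      · have := (F.anti ε hε).antitoneOn hqmem hxm hx.1
        rwa [branch_apply F hε true hqm] at this
    have hfx1 : F.f ε x ∈ Icc (-1:ℝ) 1 := ⟨le_trans hpm.1 hfx.1, le_trans hfx.2 hqm.2⟩
    exact ⟨F.f ε x, hfx, branch_unique F hε true (by simpa using hxm) hfx1⟩

end SF
namespace SF
variable (F : GoodFamily) {ε : ℝ}

lemma word_succ (a : ℕ → Bool) (n : ℕ) : word a (n + 1) = a (n + 1) :: word a n := by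
  simp [word, List.range_succ]

lemma word_length (a : ℕ → Bool) (n : ℕ) : (word a n).length = n + 1 := by
  simp [word]

lemma word_ne_nil (a : ℕ → Bool) (n : ℕ) : word a n ≠ [] := by
  intro h
  have := word_length a n
  rw [h] at this
  simp at this

lemma dropLast_word_succ (a : ℕ → Bool) (n : ℕ) :
    (word a (n + 1)).dropLast = a (n + 1) :: (word a n).dropLast := by
  rw [word_succ]
  exact List.dropLast_cons_of_ne_nil (word_ne_nil a n)

lemma word_eq_of_agree {a b : ℕ → Bool} {n : ℕ} (h : ∀ k ≤ n, a k = b k) :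
    word a n = word b n := by
  simp only [word]
  apply List.map_congr_left
  intro k hk
  simp only [List.mem_reverse, List.mem_range] at hk
  exact h k (Nat.lt_succ_iff.mp hk)

lemma Iw_cons (f : ℝ → ℝ) (b : Bool) (w : List Bool) :
    Iw f (b :: w) = branch f b '' Iw f w := by
  simp only [Iw, gw]
  rw [Set.image_comp]

lemma gw_cons (f : ℝ → ℝ) (b : Bool) (w : List Bool) (y : ℝ) :
    gw f (b :: w) y = branch f b (gw f w y) := rfl

/-- Structure of the intervals `Iw`. -/
lemma Iw_struct (hε : ε ∈ Icc 0 F.eps0) (w : List Bool) :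
    (∀ y ∈ Icc (-1:ℝ) 1, gw (F.f ε) w y ∈ Icc (-1:ℝ) 1) ∧
    ((Iw (F.f ε) w = Icc (gw (F.f ε) w (-1)) (gw (F.f ε) w 1) ∧
        gw (F.f ε) w (-1) < gw (F.f ε) w 1) ∨
      (Iw (F.f ε) w = Icc (gw (F.f ε) w 1) (gw (F.f ε) w (-1)) ∧
        gw (F.f ε) w 1 < gw (F.f ε) w (-1))) := by
  induction w with
  | nil =>
    refine ⟨fun y hy => by simpa [gw] using hy, Or.inl ⟨?_, by norm_num [gw]⟩⟩
    simp [Iw, gw]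
  | cons b w ih =>
    obtain ⟨hmap, hstr⟩ := ih
    have hm1 : gw (F.f ε) w (-1) ∈ Icc (-1:ℝ) 1 := hmap (-1) (by norm_num)
    have hm2 : gw (F.f ε) w 1 ∈ Icc (-1:ℝ) 1 := hmap 1 (by norm_num)
    have hbm : ∀ y ∈ Icc (-1:ℝ) 1, branch (F.f ε) b y ∈ Icc (-1:ℝ) 1 := by
      intro y hy
      have := branch_mem F hε b hy
      cases b
      · simp only [if_neg Bool.false_ne_true] at this
        exact ⟨this.1, le_trans this.2 (by norm_num)⟩
      · simp only [if_pos] at this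
        exact ⟨le_trans (by norm_num) this.1, this.2⟩
    refine ⟨fun y hy => hbm _ (hmap y hy), ?_⟩
    rcases hstr with ⟨him, hlt⟩ | ⟨him, hlt⟩
    · -- increasing case
      rw [Iw_cons, him]
      cases b
      · left
        rw [gw_cons, gw_cons,
          branch_false_image F hε hm1.1 (le_of_lt hlt) hm2.2]
        exact ⟨rfl, branch_false_lt F hε hm1 hm2 hlt⟩
      · right
        rw [gw_cons, gw_cons,
          branch_true_image F hε hm1.1 (le_of_lt hlt) hm2.2]
        exact ⟨rfl, branch_true_lt F hε hm1 hm2 hlt⟩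
    · -- decreasing case
      rw [Iw_cons, him]
      cases b
      · right
        rw [gw_cons, gw_cons,
          branch_false_image F hε hm2.1 (le_of_lt hlt) hm1.2]
        exact ⟨rfl, branch_false_lt F hε hm2 hm1 hlt⟩
      · left
        rw [gw_cons, gw_cons,
          branch_true_image F hε hm2.1 (le_of_lt hlt) hm1.2]
        exact ⟨rfl, branch_true_lt F hε hm2 hm1 hlt⟩

lemma len_Icc {u v : ℝ} (h : u ≤ v) : len (Icc u v) = v - u := by
  rw [len, Real.volume_Icc, ENNReal.toReal_ofReal (by linarith)]

/-- `Iw` is a nondegenerate closed interval; description via endpoints. -/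
lemma Iw_endpoints (hε : ε ∈ Icc 0 F.eps0) (w : List Bool) :
    ∃ p q : ℝ, Iw (F.f ε) w = Icc p q ∧ -1 ≤ p ∧ p < q ∧ q ≤ 1 ∧
      len (Iw (F.f ε) w) = q - p ∧
      ((p = gw (F.f ε) w (-1) ∧ q = gw (F.f ε) w 1) ∨
        (p = gw (F.f ε) w 1 ∧ q = gw (F.f ε) w (-1))) := by
  obtain ⟨hmap, hstr⟩ := Iw_struct F hε w
  have hm1 := hmap (-1) (by norm_num)
  have hm2 := hmap 1 (by norm_num)
  rcases hstr with ⟨him, hlt⟩ | ⟨him, hlt⟩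
  · exact ⟨_, _, him, hm1.1, hlt, hm2.2, by rw [him, len_Icc (le_of_lt hlt)],
      Or.inl ⟨rfl, rfl⟩⟩
  · exact ⟨_, _, him, hm2.1, hlt, hm1.2, by rw [him, len_Icc (le_of_lt hlt)],
      Or.inr ⟨rfl, rfl⟩⟩

lemma len_Iw_pos (hε : ε ∈ Icc 0 F.eps0) (w : List Bool) : 0 < len (Iw (F.f ε) w) := by
  obtain ⟨p, q, _, _, hpq, _, hlen, _⟩ := Iw_endpoints F hε w
  rw [hlen]; linarith

lemma Iw_word_subset (hε : ε ∈ Icc 0 F.eps0) (a : ℕ → Bool) (n : ℕ) :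
    Iw (F.f ε) (word a n) ⊆ Iw (F.f ε) ((word a n).dropLast) := by
  induction n with
  | zero =>
    have : (word a 0).dropLast = [] := by simp [word, List.range_succ]
    rw [this]
    simp only [Iw, gw]
    intro x hx
    obtain ⟨hmap, _⟩ := Iw_struct F hε (word a 0)
    obtain ⟨y, hy, rfl⟩ := hx
    simpa using hmap y hy
  | succ n ih =>
    rw [word_succ, List.dropLast_cons_of_ne_nil (word_ne_nil a n), Iw_cons, Iw_cons]
    exact Set.image_mono ih

lemma ratio_mem (hε : ε ∈ Icc 0 F.eps0) (a : ℕ → Bool) (n : ℕ) :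
    ratio (F.f ε) a n ∈ Ioc (0:ℝ) 1 := by
  obtain ⟨p, q, hJ, _, hpq, _, hlenJ, _⟩ := Iw_endpoints F hε (word a n)
  obtain ⟨u, v, hI, _, huv, _, hlenI, _⟩ := Iw_endpoints F hε ((word a n).dropLast)
  have hsub := Iw_word_subset F hε a n
  rw [hJ, hI] at hsub
  have h1 : u ≤ p ∧ q ≤ v := by
    have := (Icc_subset_Icc_iff (le_of_lt hpq)).mp hsub
    exact this
  constructor
  · rw [ratio, hlenJ, hlenI]
    apply div_pos <;> linarith
  · rw [ratio, hlenJ, hlenI]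
    rw [div_le_one (by linarith)]
    linarith [h1.1, h1.2]

end SF
namespace SF
variable (F : GoodFamily) {ε : ℝ}

noncomputable def mu (F : GoodFamily) : ℝ := F.lam ^ F.alpha'

lemma mu_mem : mu F ∈ Ioo (0:ℝ) 1 := by
  constructor
  · exact Real.rpow_pos_of_pos F.lam_mem.1 _
  · exact Real.rpow_lt_one (le_of_lt F.lam_mem.1) F.lam_mem.2 F.alpha'_mem.1

noncomputable def Cstep (F : GoodFamily) (c : ℝ) : ℝ :=
  max 1 (F.K' / c * F.C0 ^ F.alpha')

lemma Cstep_pos (c : ℝ) : 0 < Cstep F c := lt_of_lt_of_le one_pos (le_max_left _ _)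

def goodc (F : GoodFamily) (ε c : ℝ) : Prop :=
  0 < c ∧ ∀ x ∈ Icc (-1:ℝ) (branch (F.f ε) false 1) ∪ Icc (branch (F.f ε) true 1) 1,
    c ≤ |F.f' ε x|

lemma region_subset (hε : ε ∈ Icc 0 F.eps0) :
    Icc (-1:ℝ) (branch (F.f ε) false 1) ∪ Icc (branch (F.f ε) true 1) 1 ⊆ Icc (-1:ℝ) 1 := by
  have h1 := branch_mem F hε false (y := 1) (by norm_num)
  have h2 := branch_mem F hε true (y := 1) (by norm_num)
  simp only [if_neg Bool.false_ne_true, if_pos] at h1 h2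
  intro x hx
  rcases hx with hx | hx
  · exact ⟨hx.1, le_trans hx.2 (le_trans h1.2 (by norm_num))⟩
  · exact ⟨le_trans (le_trans (by norm_num) h2.1) hx.1, hx.2⟩

lemma branch_image_region (hε : ε ∈ Icc 0 F.eps0) (b : Bool) {p q : ℝ} (hp : -1 ≤ p)
    (hpq : p ≤ q) (hq : q ≤ 1) :
    branch (F.f ε) b '' Icc p q ⊆
      Icc (-1:ℝ) (branch (F.f ε) false 1) ∪ Icc (branch (F.f ε) true 1) 1 := by
  have hpm : p ∈ Icc (-1:ℝ) 1 := ⟨hp, le_trans hpq hq⟩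
  have hqm : q ∈ Icc (-1:ℝ) 1 := ⟨le_trans hp hpq, hq⟩
  cases b
  · rw [branch_false_image F hε hp hpq hq]
    intro x hx
    left
    have hpmem := branch_mem F hε false hpm
    simp only [if_neg Bool.false_ne_true] at hpmem
    refine ⟨le_trans hpmem.1 hx.1, le_trans hx.2 ?_⟩
    rcases eq_or_lt_of_le hqm.2 with h | h
    · rw [h]
    · exact le_of_lt (branch_false_lt F hε hqm (by norm_num) h)
  · rw [branch_true_image F hε hp hpq hq]
    intro x hx
    right
    have hpmem := branch_mem F hε true hpm
    simp only [if_pos] at hpmem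
    refine ⟨le_trans ?_ hx.1, le_trans hx.2 hpmem.2⟩
    rcases eq_or_lt_of_le hqm.2 with h | h
    · rw [h]
    · exact le_of_lt (branch_true_lt F hε hqm (by norm_num) h)

lemma mvt (hε : ε ∈ Icc 0 F.eps0) {p q : ℝ} (hp : -1 ≤ p) (hpq : p < q) (hq : q ≤ 1) :
    ∃ ξ ∈ Ioo p q, F.f ε q - F.f ε p = F.f' ε ξ * (q - p) := by
  have hc : ContinuousOn (F.f ε) (Icc p q) :=
    (f_cont F hε).mono (Icc_subset_Icc hp hq)
  have hd : ∀ x ∈ Ioo p q, HasDerivAt (F.f ε) (F.f' ε x) x := by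
    intro x hx
    have hx1 : x ∈ Icc (-1:ℝ) 1 := ⟨le_of_lt (lt_of_le_of_lt hp hx.1), le_of_lt (lt_of_lt_of_le hx.2 hq)⟩
    have := F.deriv_f ε hε x hx1
    exact this.hasDerivAt (Icc_mem_nhds (lt_of_le_of_lt hp hx.1) (lt_of_lt_of_le hx.2 hq))
  obtain ⟨ξ, hξ, hslope⟩ := exists_hasDerivAt_eq_slope (F.f ε) (F.f' ε) hpq hc hd
  refine ⟨ξ, hξ, ?_⟩
  rw [hslope, div_mul_cancel₀]
  exact sub_ne_zero.mpr (ne_of_gt hpq)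

/-- The key distortion step. -/
lemma step (hε : ε ∈ Icc 0 F.eps0) {c p q u v p₂ q₂ u₂ v₂ : ℝ}
    (hc : 0 < c)
    (hreg : ∀ x ∈ Icc u₂ v₂, x ∈ Icc (-1:ℝ) 1 ∧ c ≤ |F.f' ε x|)
    (hu₂ : u₂ ≤ p₂) (hp₂ : p₂ < q₂) (hq₂ : q₂ ≤ v₂)
    (hor : (F.f ε p₂ = p ∧ F.f ε q₂ = q ∧ F.f ε u₂ = u ∧ F.f ε v₂ = v) ∨
           (F.f ε p₂ = q ∧ F.f ε q₂ = p ∧ F.f ε u₂ = v ∧ F.f ε v₂ = u)) :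
    |(q₂ - p₂) / (v₂ - u₂) - (q - p) / (v - u)| ≤ F.K' / c * (v₂ - u₂) ^ F.alpha' := by
  have huv₂ : u₂ < v₂ := lt_of_le_of_lt hu₂ (lt_of_lt_of_le hp₂ hq₂)
  have hm1 : (-1:ℝ) ≤ u₂ := (hreg u₂ ⟨le_rfl, le_of_lt huv₂⟩).1.1
  have hm2 : v₂ ≤ 1 := (hreg v₂ ⟨le_of_lt huv₂, le_rfl⟩).1.2
  obtain ⟨ξ, hξ, hfξ⟩ := mvt F hε (le_trans hm1 hu₂) hp₂ (le_trans hq₂ hm2)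
  obtain ⟨η, hη, hfη⟩ := mvt F hε hm1 huv₂ hm2
  set A := q₂ - p₂ with hA
  set B := v₂ - u₂ with hB
  set X := F.f' ε ξ with hX
  set Y := F.f' ε η with hY
  have hξm : ξ ∈ Icc u₂ v₂ := ⟨le_trans hu₂ (le_of_lt hξ.1), le_trans (le_of_lt hξ.2) hq₂⟩
  have hηm : η ∈ Icc u₂ v₂ := ⟨le_of_lt hη.1, le_of_lt hη.2⟩
  have hXc : c ≤ |X| := (hreg ξ hξm).2
  have hYc : c ≤ |Y| := (hreg η hηm).2
  have hXne : X ≠ 0 := fun h => by rw [h] at hXc; simp at hXc; linarith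
  have hYne : Y ≠ 0 := fun h => by rw [h] at hYc; simp at hYc; linarith
  have hApos : 0 < A := by simp [hA]; linarith
  have hBpos : 0 < B := by simp [hB]; linarith
  have hAB : A ≤ B := by simp [hA, hB]; linarith
  have hqp : q - p = X * A ∧ v - u = Y * B ∨ q - p = -(X * A) ∧ v - u = -(Y * B) := by
    rcases hor with ⟨h1, h2, h3, h4⟩ | ⟨h1, h2, h3, h4⟩
    · left
      constructor
      · rw [← h1, ← h2]; exact hfξ
      · rw [← h3, ← h4]; exact hfη
    · right
      constructor
      · rw [← h2, ← h1]; rw [← neg_sub (F.f ε q₂) (F.f ε p₂), hfξ]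
      · rw [← h4, ← h3]; rw [← neg_sub (F.f ε v₂) (F.f ε u₂), hfη]
  have hratio : (q - p) / (v - u) = (X * A) / (Y * B) := by
    rcases hqp with ⟨h1, h2⟩ | ⟨h1, h2⟩
    · rw [h1, h2]
    · rw [h1, h2, neg_div_neg_eq]
  rw [hratio]
  have key : A / B - X * A / (Y * B) = A / B * ((Y - X) / Y) := by
    field_simp
  rw [key, abs_mul]
  have h1 : |A / B| ≤ 1 := by
    rw [abs_of_pos (div_pos hApos hBpos), div_le_one hBpos]
    exact hAB
  have h2 : |(Y - X) / Y| ≤ F.K' * B ^ F.alpha' / c := by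
    rw [abs_div]
    have hYX : |Y - X| ≤ F.K' * B ^ F.alpha' := by
      have hh := F.holder' ε hε η (hreg η hηm).1 ξ (hreg ξ hξm).1
      refine le_trans hh ?_
      have : |η - ξ| ≤ B := by
        rw [abs_le]
        constructor
        · simp only [hB]; linarith [hξm.1, hξm.2, hηm.1, hηm.2]
        · simp only [hB]; linarith [hξm.1, hξm.2, hηm.1, hηm.2]
      have hmono : |η - ξ| ^ F.alpha' ≤ B ^ F.alpha' :=
        Real.rpow_le_rpow (abs_nonneg _) this (le_of_lt F.alpha'_mem.1)
      exact mul_le_mul_of_nonneg_left hmono (le_of_lt F.K'_pos)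
    calc |Y - X| / |Y| ≤ (F.K' * B ^ F.alpha') / c := by
          apply div_le_div₀ (mul_nonneg (le_of_lt F.K'_pos) (Real.rpow_nonneg (le_of_lt hBpos) _)) hYX (by linarith) hYc
      _ = F.K' * B ^ F.alpha' / c := rfl
  calc |A / B| * |(Y - X) / Y| ≤ 1 * (F.K' * B ^ F.alpha' / c) :=
        mul_le_mul h1 h2 (abs_nonneg _) (by norm_num)
    _ = F.K' / c * B ^ F.alpha' := by ring

end SF
namespace SF
variable (F : GoodFamily) {ε : ℝ}

lemma ratio_diff (hε : ε ∈ Ioc 0 F.eps0) {c : ℝ} (hgc : goodc F ε c) (a : ℕ → Bool) (n : ℕ) :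
    |ratio (F.f ε) a (n + 1) - ratio (F.f ε) a n| ≤ Cstep F c * mu F ^ n := by
  have hε' : ε ∈ Icc 0 F.eps0 := ⟨le_of_lt hε.1, hε.2⟩
  rcases Nat.eq_zero_or_pos n with rfl | hn
  · have h1 := ratio_mem F hε' a 0
    have h2 := ratio_mem F hε' a 1
    have hb : |ratio (F.f ε) a 1 - ratio (F.f ε) a 0| ≤ 1 := by
      rw [abs_le]
      constructor <;> linarith [h1.1, h1.2, h2.1, h2.2]
    calc |ratio (F.f ε) a 1 - ratio (F.f ε) a 0| ≤ 1 := hb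
      _ ≤ Cstep F c := le_max_left _ _
      _ = Cstep F c * mu F ^ 0 := by rw [pow_zero, mul_one]
  · obtain ⟨p, q, hJ, hpJ, hpq, hqJ, hlenJ, _⟩ := Iw_endpoints F hε' (word a n)
    obtain ⟨u, v, hI, hpI, huv, hqI, hlenI, _⟩ := Iw_endpoints F hε' ((word a n).dropLast)
    have hsub := Iw_word_subset F hε' a n
    rw [hJ, hI] at hsub
    obtain ⟨hup, hqv⟩ := (Icc_subset_Icc_iff (le_of_lt hpq)).mp hsub
    have hpm : p ∈ Icc (-1:ℝ) 1 := ⟨hpJ, le_trans (le_of_lt hpq) hqJ⟩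
    have hqm : q ∈ Icc (-1:ℝ) 1 := ⟨le_trans hpJ (le_of_lt hpq), hqJ⟩
    have hum : u ∈ Icc (-1:ℝ) 1 := ⟨hpI, le_trans (le_of_lt huv) hqI⟩
    have hvm : v ∈ Icc (-1:ℝ) 1 := ⟨le_trans hpI (le_of_lt huv), hqI⟩
    set b := a (n + 1) with hb
    have hJ2 : Iw (F.f ε) (word a (n + 1)) = branch (F.f ε) b '' Icc p q := by
      rw [word_succ, Iw_cons, hJ]
    have hI2 : Iw (F.f ε) ((word a (n + 1)).dropLast) = branch (F.f ε) b '' Icc u v := by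
      rw [dropLast_word_succ, Iw_cons, hI]
    have hreg : ∀ x ∈ branch (F.f ε) b '' Icc u v, x ∈ Icc (-1:ℝ) 1 ∧ c ≤ |F.f' ε x| := by
      intro x hx
      have hx' := branch_image_region F hε' b hpI (le_of_lt huv) hqI hx
      exact ⟨region_subset F hε' hx', hgc.2 x hx'⟩
    have hmono : ∀ x y, x ∈ Icc (-1:ℝ) 1 → y ∈ Icc (-1:ℝ) 1 → x ≤ y →
        (b = false → branch (F.f ε) b x ≤ branch (F.f ε) b y) ∧
        (b = true → branch (F.f ε) b y ≤ branch (F.f ε) b x) := by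
      intro x y hx hy hxy
      constructor <;> intro hbe
      · rcases eq_or_lt_of_le hxy with h | h
        · rw [h]
        · exact le_of_lt (by rw [hbe]; exact branch_false_lt F hε' hx hy h)
      · rcases eq_or_lt_of_le hxy with h | h
        · rw [h]
        · exact le_of_lt (by rw [hbe]; exact branch_true_lt F hε' hx hy h)
    -- choose endpoints according to orientation of the branch
    obtain ⟨p₂, q₂, u₂, v₂, hJ2e, hI2e, hu₂, hp₂, hq₂, hor⟩ :
        ∃ p₂ q₂ u₂ v₂ : ℝ,
          branch (F.f ε) b '' Icc p q = Icc p₂ q₂ ∧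
          branch (F.f ε) b '' Icc u v = Icc u₂ v₂ ∧
          u₂ ≤ p₂ ∧ p₂ < q₂ ∧ q₂ ≤ v₂ ∧
          ((F.f ε p₂ = p ∧ F.f ε q₂ = q ∧ F.f ε u₂ = u ∧ F.f ε v₂ = v) ∨
           (F.f ε p₂ = q ∧ F.f ε q₂ = p ∧ F.f ε u₂ = v ∧ F.f ε v₂ = u)) := by
      cases hbv : b
      · refine ⟨branch (F.f ε) false p, branch (F.f ε) false q,
          branch (F.f ε) false u, branch (F.f ε) false v, ?_, ?_, ?_, ?_, ?_, Or.inl ?_⟩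
        · exact branch_false_image F hε' hpJ (le_of_lt hpq) hqJ
        · exact branch_false_image F hε' hpI (le_of_lt huv) hqI
        · have := (hmono u p hum hpm hup).1 hbv; rw [hbv] at this; exact this
        · exact branch_false_lt F hε' hpm hqm hpq
        · have := (hmono q v hqm hvm hqv).1 hbv; rw [hbv] at this; exact this
        · exact ⟨branch_apply F hε' false hpm, branch_apply F hε' false hqm,
            branch_apply F hε' false hum, branch_apply F hε' false hvm⟩
      · refine ⟨branch (F.f ε) true q, branch (F.f ε) true p,
          branch (F.f ε) true v, branch (F.f ε) true u, ?_, ?_, ?_, ?_, ?_, Or.inr ?_⟩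
        · exact branch_true_image F hε' hpJ (le_of_lt hpq) hqJ
        · exact branch_true_image F hε' hpI (le_of_lt huv) hqI
        · have := (hmono q v hqm hvm hqv).2 hbv; rw [hbv] at this; exact this
        · exact branch_true_lt F hε' hpm hqm hpq
        · have := (hmono u p hum hpm hup).2 hbv; rw [hbv] at this; exact this
        · exact ⟨branch_apply F hε' true hqm, branch_apply F hε' true hpm,
            branch_apply F hε' true hvm, branch_apply F hε' true hum⟩
    rw [hJ2e] at hJ2
    rw [hI2e] at hI2
    have hreg' : ∀ x ∈ Icc u₂ v₂, x ∈ Icc (-1:ℝ) 1 ∧ c ≤ |F.f' ε x| := by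
      intro x hx
      exact hreg x (by rw [hI2e]; exact hx)
    have hstep := step F hε' hgc.1 hreg' hu₂ hp₂ hq₂ hor
    have hr1 : ratio (F.f ε) a (n + 1) = (q₂ - p₂) / (v₂ - u₂) := by
      rw [ratio, hJ2, hI2, len_Icc (le_of_lt hp₂),
        len_Icc (le_of_lt (lt_of_le_of_lt hu₂ (lt_of_lt_of_le hp₂ hq₂)))]
    have hr0 : ratio (F.f ε) a n = (q - p) / (v - u) := by
      rw [ratio, hlenJ, hlenI]
    rw [hr1, hr0]
    refine le_trans hstep ?_
    -- bound (v₂ - u₂) ^ alpha'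
    have hlen2 : v₂ - u₂ ≤ F.C0 * F.lam ^ n := by
      have hlist : ((word a (n + 1)).dropLast).length = n + 1 := by
        rw [dropLast_word_succ]
        simp [word_length]
      have hd := F.decay ε hε' n hn ((word a (n + 1)).dropLast) hlist
      rw [hI2, len_Icc (le_of_lt (lt_of_le_of_lt hu₂ (lt_of_lt_of_le hp₂ hq₂)))] at hd
      exact hd
    have hBpos : (0:ℝ) < v₂ - u₂ := by linarith [lt_of_le_of_lt hu₂ (lt_of_lt_of_le hp₂ hq₂)]
    have hrpow : (v₂ - u₂) ^ F.alpha' ≤ F.C0 ^ F.alpha' * mu F ^ n := by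
      have h1 : (v₂ - u₂) ^ F.alpha' ≤ (F.C0 * F.lam ^ n) ^ F.alpha' :=
        Real.rpow_le_rpow (le_of_lt hBpos) hlen2 (le_of_lt F.alpha'_mem.1)
      refine le_trans h1 (le_of_eq ?_)
      rw [Real.mul_rpow (le_of_lt F.C0_pos) (pow_nonneg (le_of_lt F.lam_mem.1) n)]
      congr 1
      rw [mu, ← Real.rpow_natCast F.lam n, ← Real.rpow_natCast (F.lam ^ F.alpha') n,
        ← Real.rpow_mul (le_of_lt F.lam_mem.1), ← Real.rpow_mul (le_of_lt F.lam_mem.1),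
        mul_comm]
    calc F.K' / c * (v₂ - u₂) ^ F.alpha' ≤ F.K' / c * (F.C0 ^ F.alpha' * mu F ^ n) := by
          apply mul_le_mul_of_nonneg_left hrpow
          exact le_of_lt (div_pos F.K'_pos hgc.1)
      _ = F.K' / c * F.C0 ^ F.alpha' * mu F ^ n := by ring
      _ ≤ Cstep F c * mu F ^ n := by
          apply mul_le_mul_of_nonneg_right (le_max_right _ _)
          exact pow_nonneg (le_of_lt (mu_mem F).1) n

end SF
namespace SF
variable (F : GoodFamily) {ε : ℝ}

noncomputable def sfun (F : GoodFamily) : ℝ → (ℕ → Bool) → ℝ :=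
  fun ε a => limUnder atTop (ratio (F.f ε) a)

lemma ratio_dist (hε : ε ∈ Ioc 0 F.eps0) {c : ℝ} (hgc : goodc F ε c) (a : ℕ → Bool) :
    ∀ n, dist (ratio (F.f ε) a n) (ratio (F.f ε) a (n + 1)) ≤ Cstep F c * mu F ^ n := by
  intro n
  rw [Real.dist_eq, abs_sub_comm]
  exact ratio_diff F hε hgc a n

lemma ratio_tendsto (hε : ε ∈ Ioc 0 F.eps0) {c : ℝ} (hgc : goodc F ε c) (a : ℕ → Bool) :
    Tendsto (ratio (F.f ε) a) atTop (𝓝 (sfun F ε a)) := by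
  have hcs : CauchySeq (ratio (F.f ε) a) :=
    cauchySeq_of_le_geometric (mu F) (Cstep F c) (mu_mem F).2 (ratio_dist F hε hgc a)
  obtain ⟨l, hl⟩ := cauchySeq_tendsto_of_complete hcs
  rwa [sfun, hl.limUnder_eq]

lemma ratio_tail (hε : ε ∈ Ioc 0 F.eps0) {c : ℝ} (hgc : goodc F ε c) (a : ℕ → Bool) (n : ℕ) :
    dist (ratio (F.f ε) a n) (sfun F ε a) ≤ Cstep F c * mu F ^ n / (1 - mu F) :=
  dist_le_of_le_geometric_of_tendsto (mu F) (Cstep F c) (mu_mem F).2 (ratio_dist F hε hgc a)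
    (ratio_tendsto F hε hgc a) n

lemma sfun_mem (hε : ε ∈ Ioc 0 F.eps0) {c : ℝ} (hgc : goodc F ε c) (a : ℕ → Bool) :
    sfun F ε a ∈ Icc (0:ℝ) 1 := by
  have hε' : ε ∈ Icc 0 F.eps0 := ⟨le_of_lt hε.1, hε.2⟩
  have ht := ratio_tendsto F hε hgc a
  constructor
  · exact le_of_tendsto_of_tendsto' tendsto_const_nhds ht
      (fun n => le_of_lt (ratio_mem F hε' a n).1)
  · exact le_of_tendsto_of_tendsto' ht tendsto_const_nhds
      (fun n => (ratio_mem F hε' a n).2)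

lemma ratio_congr (hab : ∀ k ≤ n, a k = b k) (f : ℝ → ℝ) :
    ratio f a n = ratio f b n := by
  rw [ratio, ratio, word_eq_of_agree hab]

lemma sfun_holder (hε : ε ∈ Ioc 0 F.eps0) {c : ℝ} (hgc : goodc F ε c) :
    HolderOnDual (sfun F ε) := by
  refine ⟨max 1 (2 * Cstep F c / ((1 - mu F) * mu F)), lt_of_lt_of_le one_pos (le_max_left _ _),
    mu F, mu_mem F, ?_⟩
  intro a b n hab
  rcases Nat.eq_zero_or_pos n with rfl | hn
  · have h1 := sfun_mem F hε hgc a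
    have h2 := sfun_mem F hε hgc b
    have : |sfun F ε a - sfun F ε b| ≤ 1 := by
      rw [abs_le]; constructor <;> linarith [h1.1, h1.2, h2.1, h2.2]
    calc |sfun F ε a - sfun F ε b| ≤ 1 := this
      _ ≤ max 1 (2 * Cstep F c / ((1 - mu F) * mu F)) * 1 := by
          rw [mul_one]; exact le_max_left _ _
      _ = max 1 (2 * Cstep F c / ((1 - mu F) * mu F)) * mu F ^ 0 := by rw [pow_zero]
  · obtain ⟨m, rfl⟩ : ∃ m, n = m + 1 := ⟨n - 1, (Nat.succ_pred_eq_of_pos hn).symm⟩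
    have hrr : ratio (F.f ε) a m = ratio (F.f ε) b m :=
      ratio_congr (fun k hk => hab k (Nat.lt_succ_of_le hk)) (F.f ε)
    have t1 := ratio_tail F hε hgc a m
    have t2 := ratio_tail F hε hgc b m
    have hd : |sfun F ε a - sfun F ε b| ≤ 2 * (Cstep F c * mu F ^ m / (1 - mu F)) := by
      have htri := dist_triangle (sfun F ε a) (ratio (F.f ε) a m) (sfun F ε b)
      have e1 : dist (sfun F ε a) (ratio (F.f ε) a m) ≤ Cstep F c * mu F ^ m / (1 - mu F) := by
        rw [dist_comm]; exact t1
      have e2 : dist (ratio (F.f ε) a m) (sfun F ε b) ≤ Cstep F c * mu F ^ m / (1 - mu F) := by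
        rw [hrr]; exact t2
      have hh := le_trans htri (add_le_add e1 e2)
      rw [Real.dist_eq] at hh
      linarith
    refine le_trans hd ?_
    have hmu0 := (mu_mem F).1
    have hmu1 := (mu_mem F).2
    have heq : (2 * Cstep F c / ((1 - mu F) * mu F)) * mu F ^ (m + 1) =
        2 * (Cstep F c * mu F ^ m / (1 - mu F)) := by
      have h1 : (1 : ℝ) - mu F ≠ 0 := ne_of_gt (by linarith)
      have h2 : mu F ≠ 0 := ne_of_gt hmu0
      field_simp
      ring
    rw [← heq]
    apply mul_le_mul_of_nonneg_right (le_max_right _ _)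
    exact pow_nonneg (le_of_lt hmu0) _

end SF
namespace SF
variable (F : GoodFamily) {ε : ℝ}

lemma exists_goodc_uniform {ε₁ : ℝ} (hε₁ : ε₁ ∈ Ioc 0 F.eps0) :
    ∃ c h : ℝ, 0 < c ∧ 0 < h ∧ ∀ ε, ε ∈ Icc 0 F.eps0 → |ε - ε₁| ≤ h → goodc F ε c := by
  have hε₁' : ε₁ ∈ Icc 0 F.eps0 := ⟨le_of_lt hε₁.1, hε₁.2⟩
  -- Step 1: find d, h₀ such that f ε x > 1 for |x| ≤ d, |ε - ε₁| ≤ h₀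
  have hmem : ((ε₁, 0) : ℝ × ℝ) ∈ Icc 0 F.eps0 ×ˢ Icc (-1:ℝ) 1 := ⟨hε₁', by norm_num⟩
  have hcont : ContinuousWithinAt (fun p : ℝ × ℝ => F.f p.1 p.2)
      (Icc 0 F.eps0 ×ˢ Icc (-1:ℝ) 1) (ε₁, 0) := F.smooth.continuousOn _ hmem
  have hval : F.f ε₁ 0 = 1 + ε₁ := F.map_zero ε₁ hε₁'
  have hev : ∀ᶠ p : ℝ × ℝ in nhdsWithin (ε₁, 0) (Icc 0 F.eps0 ×ˢ Icc (-1:ℝ) 1),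
      1 < F.f p.1 p.2 := by
    apply hcont.eventually
    have hval' : (fun p : ℝ × ℝ => F.f p.1 p.2) (ε₁, 0) = 1 + ε₁ := hval
    rw [hval']
    exact eventually_gt_nhds (by linarith [hε₁.1])
  rw [eventually_nhdsWithin_iff, Metric.eventually_nhds_iff] at hev
  obtain ⟨δ, hδpos, hδ⟩ := hev
  set d : ℝ := min (δ / 2) (1 / 2) with hd
  have hdpos : 0 < d := lt_min (by linarith) (by norm_num)
  have hdle : d ≤ 1 / 2 := min_le_right _ _
  set h₀ : ℝ := δ / 2 with hh₀
  have hbig : ∀ ε, ε ∈ Icc 0 F.eps0 → |ε - ε₁| ≤ h₀ → ∀ x ∈ Icc (-1:ℝ) 1, |x| ≤ d →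
      1 < F.f ε x := by
    intro ε hε hεd x hx hxd
    apply hδ (y := (ε, x)) ?_ ⟨hε, hx⟩
    rw [Prod.dist_eq, Real.dist_eq, Real.dist_eq, sub_zero]
    apply max_lt (lt_of_le_of_lt hεd (by linarith))
      (lt_of_le_of_lt hxd (lt_of_le_of_lt (min_le_left _ _) (by linarith)))
  -- Step 2: branch points avoid (-d, d)
  have hreg2 : ∀ ε, ε ∈ Icc 0 F.eps0 → |ε - ε₁| ≤ h₀ →
      branch (F.f ε) false 1 ≤ -d ∧ d ≤ branch (F.f ε) true 1 := by
    intro ε hε hεd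
    have hm0 := branch_mem F hε false (y := 1) (by norm_num)
    have hm1 := branch_mem F hε true (y := 1) (by norm_num)
    simp only [if_neg Bool.false_ne_true, if_pos] at hm0 hm1
    have ha0 := branch_apply F hε false (y := 1) (by norm_num)
    have ha1 := branch_apply F hε true (y := 1) (by norm_num)
    constructor
    · by_contra hcon
      push_neg at hcon
      have : |branch (F.f ε) false 1| ≤ d := by
        rw [abs_le]; constructor <;> linarith [hm0.1, hm0.2]
      have := hbig ε hε hεd _ ⟨hm0.1, le_trans hm0.2 (by norm_num)⟩ this
      rw [ha0] at this; linarith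
    · by_contra hcon
      push_neg at hcon
      have : |branch (F.f ε) true 1| ≤ d := by
        rw [abs_le]; constructor <;> linarith [hm1.1, hm1.2]
      have := hbig ε hε hεd _ ⟨le_trans (by norm_num) hm1.1, hm1.2⟩ this
      rw [ha1] at this; linarith
  -- Step 3: lower bound for |R| on compact sets
  set A : ℝ := max 0 (ε₁ - h₀) with hA
  set B : ℝ := min F.eps0 (ε₁ + h₀) with hB
  have hAB : A ≤ ε₁ ∧ ε₁ ≤ B := ⟨max_le hε₁'.1 (by linarith), le_min hε₁.2 (by linarith)⟩
  have hABsub : Icc A B ⊆ Icc 0 F.eps0 :=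
    Icc_subset_Icc (le_max_left _ _) (min_le_left _ _)
  have hKneg : IsCompact (Icc A B ×ˢ Icc (-1:ℝ) (-d)) := (isCompact_Icc).prod isCompact_Icc
  have hKpos : IsCompact (Icc A B ×ˢ Icc d (1:ℝ)) := (isCompact_Icc).prod isCompact_Icc
  have hnonneg : (Icc A B ×ˢ Icc (-1:ℝ) (-d)).Nonempty :=
    ⟨(ε₁, -1), ⟨hAB.1, hAB.2⟩, le_refl _, show (-1:ℝ) ≤ -d by linarith⟩
  have hnonpos : (Icc A B ×ˢ Icc d (1:ℝ)).Nonempty :=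
    ⟨(ε₁, 1), ⟨hAB.1, hAB.2⟩, show d ≤ (1:ℝ) by linarith, le_refl _⟩
  have hsubneg : Icc A B ×ˢ Icc (-1:ℝ) (-d) ⊆ Icc 0 F.eps0 ×ˢ Icc (-1:ℝ) 0 := by
    intro p hp
    exact ⟨hABsub hp.1, hp.2.1, le_trans hp.2.2 (by linarith)⟩
  have hsubpos : Icc A B ×ˢ Icc d (1:ℝ) ⊆ Icc 0 F.eps0 ×ˢ Icc (0:ℝ) 1 := by
    intro p hp
    exact ⟨hABsub hp.1, le_trans (le_of_lt hdpos) hp.2.1, hp.2.2⟩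
  obtain ⟨pn, hpn, hpnmin⟩ := hKneg.exists_isMinOn hnonneg ((F.Rneg_cont.mono hsubneg).abs)
  obtain ⟨pp, hpp, hppmin⟩ := hKpos.exists_isMinOn hnonpos ((F.Rpos_cont.mono hsubpos).abs)
  set mneg : ℝ := |F.Rneg pn.1 pn.2| with hmneg
  set mpos : ℝ := |F.Rpos pp.1 pp.2| with hmpos
  have hmnegpos : 0 < mneg := by
    rw [hmneg, abs_pos]
    exact F.Rneg_ne pn.1 (hsubneg hpn).1 pn.2 (hsubneg hpn).2
  have hmpospos : 0 < mpos := by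
    rw [hmpos, abs_pos]
    exact F.Rpos_ne pp.1 (hsubpos hpp).1 pp.2 (hsubpos hpp).2
  set c : ℝ := min mneg mpos * d ^ (F.gamma - 1) with hc
  have hγ : (0:ℝ) ≤ F.gamma - 1 := by linarith [F.one_lt_gamma]
  have hcpos : 0 < c := by
    apply mul_pos (lt_min hmnegpos hmpospos)
    exact Real.rpow_pos_of_pos hdpos _
  refine ⟨c, h₀, hcpos, by positivity, ?_⟩
  intro ε hε hεd
  refine ⟨hcpos, ?_⟩
  intro x hx
  have hεAB : ε ∈ Icc A B := by
    rw [abs_le] at hεd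
    exact ⟨max_le hε.1 (by linarith), le_min hε.2 (by linarith)⟩
  have hd2 := hreg2 ε hε hεd
  rcases hx with hx | hx
  · -- left region
    have hx' : x ∈ Icc (-1:ℝ) (-d) := ⟨hx.1, le_trans hx.2 hd2.1⟩
    have hxIco : x ∈ Ico (-1:ℝ) 0 := ⟨hx'.1, by linarith [hx'.2]⟩
    have heq := F.Rneg_eq ε hε x hxIco
    have habs : |x| = -x := abs_of_neg (by linarith [hx'.2])
    have hxd : d ≤ |x| := by rw [habs]; linarith [hx'.2]
    have hpow : (0:ℝ) < |x| ^ (F.gamma - 1) :=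
      Real.rpow_pos_of_pos (by rw [habs]; linarith [hx'.2]) _
    have hf' : F.f' ε x = F.Rneg ε x * |x| ^ (F.gamma - 1) := by
      rw [heq, div_mul_cancel₀]
      exact ne_of_gt hpow
    rw [hf', abs_mul, abs_of_pos hpow]
    have h1 : mneg ≤ |F.Rneg ε x| := isMinOn_iff.mp hpnmin (ε, x) ⟨hεAB, hx'⟩
    have h2 : d ^ (F.gamma - 1) ≤ |x| ^ (F.gamma - 1) :=
      Real.rpow_le_rpow (le_of_lt hdpos) hxd hγ
    calc c ≤ mneg * (d ^ (F.gamma - 1)) :=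
          mul_le_mul_of_nonneg_right (min_le_left _ _) (le_of_lt (Real.rpow_pos_of_pos hdpos _))
      _ ≤ |F.Rneg ε x| * |x| ^ (F.gamma - 1) :=
          mul_le_mul h1 h2 (le_of_lt (Real.rpow_pos_of_pos hdpos _)) (abs_nonneg _)
  · -- right region
    have hx' : x ∈ Icc d (1:ℝ) := ⟨le_trans hd2.2 hx.1, hx.2⟩
    have hxIoc : x ∈ Ioc (0:ℝ) 1 := ⟨by linarith [hx'.1], hx'.2⟩
    have heq := F.Rpos_eq ε hε x hxIoc
    have habs : |x| = x := abs_of_pos (by linarith [hx'.1])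
    have hxd : d ≤ |x| := by rw [habs]; exact hx'.1
    have hpow : (0:ℝ) < |x| ^ (F.gamma - 1) :=
      Real.rpow_pos_of_pos (by rw [habs]; linarith [hx'.1]) _
    have hf' : F.f' ε x = F.Rpos ε x * |x| ^ (F.gamma - 1) := by
      rw [heq, div_mul_cancel₀]
      exact ne_of_gt hpow
    rw [hf', abs_mul, abs_of_pos hpow]
    have h1 : mpos ≤ |F.Rpos ε x| := isMinOn_iff.mp hppmin (ε, x) ⟨hεAB, hx'⟩
    have h2 : d ^ (F.gamma - 1) ≤ |x| ^ (F.gamma - 1) :=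
      Real.rpow_le_rpow (le_of_lt hdpos) hxd hγ
    calc c ≤ mpos * (d ^ (F.gamma - 1)) :=
          mul_le_mul_of_nonneg_right (min_le_right _ _) (le_of_lt (Real.rpow_pos_of_pos hdpos _))
      _ ≤ |F.Rpos ε x| * |x| ^ (F.gamma - 1) :=
          mul_le_mul h1 h2 (le_of_lt (Real.rpow_pos_of_pos hdpos _)) (abs_nonneg _)

end SF
namespace SF
variable (F : GoodFamily)

lemma inv_contOn {I : Set ℝ} (hIcomp : IsCompact I) (hIsub : I ⊆ Icc (-1:ℝ) 1)
    (g : ℝ → ℝ → ℝ)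
    (hg_mem : ∀ ε ∈ Icc 0 F.eps0, ∀ y ∈ Icc (-1:ℝ) 1, g ε y ∈ I)
    (hg_apply : ∀ ε ∈ Icc 0 F.eps0, ∀ y ∈ Icc (-1:ℝ) 1, F.f ε (g ε y) = y)
    (hinj : ∀ ε ∈ Icc 0 F.eps0, InjOn (F.f ε) I) :
    ContinuousOn (fun p : ℝ × ℝ => g p.1 p.2) (Icc 0 F.eps0 ×ˢ Icc (-1:ℝ) 1) := by
  set K : Set (ℝ × ℝ) := Icc 0 F.eps0 ×ˢ I with hKdef
  have hK : IsCompact K := isCompact_Icc.prod hIcomp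
  set D : Set (ℝ × ℝ) := Icc 0 F.eps0 ×ˢ Icc (-1:ℝ) 1 with hDdef
  set Φ : ℝ × ℝ → ℝ × ℝ := fun p => (p.1, F.f p.1 p.2) with hΦdef
  have hKD : K ⊆ D := prod_mono (subset_refl _) hIsub
  have hΦc : ContinuousOn Φ K :=
    (continuousOn_fst).prodMk (F.smooth.continuousOn.mono hKD)
  haveI : CompactSpace K := isCompact_iff_compactSpace.mp hK
  set S := Φ '' K with hS
  have hDS : D ⊆ S := by
    rintro ⟨ε, y⟩ ⟨hε, hy⟩
    refine ⟨(ε, g ε y), ⟨hε, hg_mem ε hε y hy⟩, ?_⟩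
    show (ε, F.f ε (g ε y)) = (ε, y)
    rw [hg_apply ε hε y hy]
  have hbij : Function.Bijective (fun p : K => (⟨Φ p, mem_image_of_mem Φ p.2⟩ : S)) := by
    constructor
    · rintro ⟨p, hp⟩ ⟨q, hq⟩ h
      simp only [Subtype.mk.injEq] at h
      obtain ⟨ha, hb⟩ := Prod.ext_iff.mp h
      have h1 : p.1 = q.1 := ha
      have h2f : F.f p.1 p.2 = F.f q.1 q.2 := hb
      have h2 : p.2 = q.2 := by
        apply hinj p.1 hp.1 hp.2 hq.2
        rw [h2f, h1]
      exact Subtype.ext (Prod.ext h1 h2)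
    · rintro ⟨q, hq⟩
      obtain ⟨p, hp, hpq⟩ := hq
      exact ⟨⟨p, hp⟩, Subtype.ext hpq⟩
  set e : K ≃ S := Equiv.ofBijective _ hbij with hedef
  have hec : Continuous e :=
    Continuous.subtype_mk (continuousOn_iff_continuous_restrict.mp hΦc) _
  let homeo := hec.homeoOfEquivCompactToT2
  have hsymc : Continuous homeo.symm := homeo.symm.continuous
  have hkey : ∀ p, ∀ hp : p ∈ D, ((homeo.symm ⟨p, hDS hp⟩ : K) : ℝ × ℝ) = (p.1, g p.1 p.2) := by
    intro p hp
    have hmemK : ((p.1, g p.1 p.2) : ℝ × ℝ) ∈ K := ⟨hp.1, hg_mem p.1 hp.1 p.2 hp.2⟩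
    have happ : homeo ⟨(p.1, g p.1 p.2), hmemK⟩ = ⟨p, hDS hp⟩ := by
      apply Subtype.ext
      show Φ (p.1, g p.1 p.2) = p
      show (p.1, F.f p.1 (g p.1 p.2)) = p
      rw [hg_apply p.1 hp.1 p.2 hp.2]
    rw [← happ, Homeomorph.symm_apply_apply]
  rw [continuousOn_iff_continuous_restrict]
  have heq : D.restrict (fun p : ℝ × ℝ => g p.1 p.2) =
      fun p : D => ((homeo.symm ⟨p.1, hDS p.2⟩ : K) : ℝ × ℝ).2 := by
    funext p
    rw [hkey p.1 p.2]
    rfl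
  rw [show D.domRestrict (fun p : ℝ × ℝ => g p.1 p.2) = D.restrict (fun p : ℝ × ℝ => g p.1 p.2) from rfl, heq]
  exact continuous_snd.comp (continuous_subtype_val.comp (hsymc.comp
    (Continuous.subtype_mk continuous_subtype_val _)))

lemma branch_contOn (b : Bool) :
    ContinuousOn (fun p : ℝ × ℝ => branch (F.f p.1) b p.2) (Icc 0 F.eps0 ×ˢ Icc (-1:ℝ) 1) := by
  cases b
  · refine inv_contOn F (I := Icc (-1:ℝ) 0) isCompact_Icc
      (Icc_subset_Icc le_rfl (by norm_num))
      (fun ε y => branch (F.f ε) false y) ?_ ?_ ?_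
    · intro ε hε y hy
      have := branch_mem F hε false hy
      simpa using this
    · intro ε hε y hy
      exact branch_apply F hε false hy
    · intro ε hε
      exact (F.mono ε hε).injOn
  · refine inv_contOn F (I := Icc (0:ℝ) 1) isCompact_Icc
      (Icc_subset_Icc (by norm_num) le_rfl)
      (fun ε y => branch (F.f ε) true y) ?_ ?_ ?_
    · intro ε hε y hy
      have := branch_mem F hε true hy
      simpa using this
    · intro ε hε y hy
      exact branch_apply F hε true hy
    · intro ε hε
      exact (F.anti ε hε).injOn

lemma gw_contOn (w : List Bool) {y : ℝ} (hy : y ∈ Icc (-1:ℝ) 1) :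
    ContinuousOn (fun ε => gw (F.f ε) w y) (Icc 0 F.eps0) := by
  induction w with
  | nil => simpa [gw] using continuousOn_const
  | cons b w ih =>
    have hmap : ∀ ε ∈ Icc 0 F.eps0, gw (F.f ε) w y ∈ Icc (-1:ℝ) 1 := by
      intro ε hε
      exact (Iw_struct F hε w).1 y hy
    have : (fun ε => gw (F.f ε) (b :: w) y) =
        (fun p : ℝ × ℝ => branch (F.f p.1) b p.2) ∘ (fun ε => (ε, gw (F.f ε) w y)) := by
      funext ε
      rfl
    rw [this]
    apply (branch_contOn F b).comp
    · exact (continuousOn_id).prodMk ih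
    · intro ε hε
      exact ⟨hε, hmap ε hε⟩

lemma len_contOn (w : List Bool) :
    ContinuousOn (fun ε => len (Iw (F.f ε) w)) (Icc 0 F.eps0) := by
  have heq : ∀ ε ∈ Icc 0 F.eps0,
      len (Iw (F.f ε) w) = |gw (F.f ε) w 1 - gw (F.f ε) w (-1)| := by
    intro ε hε
    obtain ⟨p, q, hIw, _, hpq, _, hlen, hor⟩ := Iw_endpoints F hε w
    rcases hor with ⟨h1, h2⟩ | ⟨h1, h2⟩
    · rw [hlen, ← h1, ← h2, abs_of_pos (by linarith)]
    · rw [hlen, ← h1, ← h2, abs_of_nonpos (by linarith), neg_sub]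
  apply ContinuousOn.congr _ heq
  apply ContinuousOn.abs
  exact (gw_contOn F w (by norm_num)).sub (gw_contOn F w (by norm_num))

end SF
namespace SF
variable (F : GoodFamily)

lemma ratio_contWithinAt {ε₁ : ℝ} (hε₁ : ε₁ ∈ Icc 0 F.eps0) (a : ℕ → Bool) (n : ℕ) :
    ContinuousWithinAt (fun ε => ratio (F.f ε) a n) (Icc 0 F.eps0) ε₁ := by
  have h1 := (len_contOn F (word a n)) ε₁ hε₁
  have h2 := (len_contOn F ((word a n).dropLast)) ε₁ hε₁
  exact h1.div h2 (ne_of_gt (len_Iw_pos F hε₁ _))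

end SF

/-- Theorem A, existence, Hölder continuity and continuity in ε of scaling
functions: for a good family, for every `0 < ε ≤ ε₀` the scaling function `s_ε` of `f_ε`
exists and is Hölder continuous on the dual Cantor set, and `s_ε → s_{ε₁}` uniformly as
`ε → ε₁` within `(0, ε₀]`. -/
theorem scaling_functions_exist_and_vary_continuously (F : GoodFamily) :
    ∃ s : ℝ → (ℕ → Bool) → ℝ,
      (∀ ε ∈ Ioc 0 F.eps0, IsScalingFun (F.f ε) (s ε) ∧ HolderOnDual (s ε)) ∧
      (∀ ε₁ ∈ Ioc 0 F.eps0,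
        TendstoUniformly s (s ε₁) (nhdsWithin ε₁ (Ioc 0 F.eps0))) := by
  classical
  refine ⟨SF.sfun F, ?_, ?_⟩
  · intro ε hε
    obtain ⟨c, h, hc, hh, hgood⟩ := SF.exists_goodc_uniform F hε
    have hgc : SF.goodc F ε c := hgood ε ⟨le_of_lt hε.1, hε.2⟩ (by simp; linarith)
    exact ⟨fun a => SF.ratio_tendsto F hε hgc a, SF.sfun_holder F hε hgc⟩
  · intro ε₁ hε₁
    obtain ⟨c, h, hc, hh, hgood⟩ := SF.exists_goodc_uniform F hε₁
    have hε₁' : ε₁ ∈ Icc 0 F.eps0 := ⟨le_of_lt hε₁.1, hε₁.2⟩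
    have hgc₁ : SF.goodc F ε₁ c := hgood ε₁ hε₁' (by simp; linarith)
    rw [Metric.tendstoUniformly_iff]
    intro ζ hζ
    have hζ4 : 0 < ζ / 4 := by linarith
    -- choose N with the tail bound < ζ/4
    have htail : Filter.Tendsto (fun n : ℕ => SF.Cstep F c * SF.mu F ^ n / (1 - SF.mu F))
        atTop (nhds 0) := by
      have h0 := tendsto_pow_atTop_nhds_zero_of_lt_one (le_of_lt (SF.mu_mem F).1)
        (SF.mu_mem F).2
      have h1 := (h0.const_mul (SF.Cstep F c)).div_const (1 - SF.mu F)
      simpa using h1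
    obtain ⟨N, hN⟩ : ∃ N : ℕ, SF.Cstep F c * SF.mu F ^ N / (1 - SF.mu F) < ζ / 4 := by
      have := htail.eventually (eventually_lt_nhds hζ4)
      exact this.exists
    -- finite family of representatives
    set ext : (Fin (N + 1) → Bool) → ℕ → Bool :=
      fun v k => if hk : k < N + 1 then v ⟨k, hk⟩ else false with hext
    have hev1 : ∀ᶠ ε in nhdsWithin ε₁ (Ioc 0 F.eps0), ε ∈ Ioc 0 F.eps0 :=
      eventually_mem_nhdsWithin
    have hev2 : ∀ᶠ ε in nhdsWithin ε₁ (Ioc 0 F.eps0), |ε - ε₁| ≤ h := by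
      apply Filter.Eventually.filter_mono nhdsWithin_le_nhds
      have := Metric.closedBall_mem_nhds ε₁ hh
      filter_upwards [this] with x hx
      simpa [Real.dist_eq] using hx
    have hev3 : ∀ᶠ ε in nhdsWithin ε₁ (Ioc 0 F.eps0), ∀ v : Fin (N + 1) → Bool,
        dist (ratio (F.f ε) (ext v) N) (ratio (F.f ε₁) (ext v) N) < ζ / 4 := by
      rw [Filter.eventually_all]
      intro v
      have hcont := SF.ratio_contWithinAt F hε₁' (ext v) N
      have htend : Filter.Tendsto (fun ε => ratio (F.f ε) (ext v) N)
          (nhdsWithin ε₁ (Ioc 0 F.eps0)) (nhds (ratio (F.f ε₁) (ext v) N)) :=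
        hcont.mono_left (nhdsWithin_mono ε₁ (Ioc_subset_Icc_self))
      exact (Metric.tendsto_nhds.mp htend) (ζ / 4) hζ4
    filter_upwards [hev1, hev2, hev3] with ε hmem hdist hrat
    intro a
    have hgc : SF.goodc F ε c := hgood ε ⟨le_of_lt hmem.1, hmem.2⟩ hdist
    set v : Fin (N + 1) → Bool := fun i => a i with hv
    have hagree : ∀ k ≤ N, a k = ext v k := by
      intro k hk
      simp only [hext, hv]
      rw [dif_pos (Nat.lt_succ_of_le hk)]
    have hra : ∀ ε' : ℝ, ratio (F.f ε') a N = ratio (F.f ε') (ext v) N :=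
      fun ε' => SF.ratio_congr hagree (F.f ε')
    have t1 : dist (SF.sfun F ε₁ a) (ratio (F.f ε₁) a N) < ζ / 4 := by
      rw [dist_comm]
      exact lt_of_le_of_lt (SF.ratio_tail F hε₁ hgc₁ a N) hN
    have t3 : dist (ratio (F.f ε) a N) (SF.sfun F ε a) < ζ / 4 :=
      lt_of_le_of_lt (SF.ratio_tail F hmem hgc a N) hN
    have t2 : dist (ratio (F.f ε₁) a N) (ratio (F.f ε) a N) < ζ / 4 := by
      rw [hra ε₁, hra ε, dist_comm]
      exact hrat v
    calc dist (SF.sfun F ε₁ a) (SF.sfun F ε a)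
        ≤ dist (SF.sfun F ε₁ a) (ratio (F.f ε₁) a N) +
          dist (ratio (F.f ε₁) a N) (ratio (F.f ε) a N) +
          dist (ratio (F.f ε) a N) (SF.sfun F ε a) := dist_triangle4 _ _ _ _
      _ < ζ / 4 + ζ / 4 + ζ / 4 := by linarith
      _ < ζ := by linarith
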